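/- For every positive integer n, the number of cyclic subgroups of ℤ_n × ℤ_n equals Σ_{d ∣ n} ψ(d), where ψ(d) = d · Π_{p ∣ d} (1 + 1/p) is the Dedekind psi function. -/

import Mathlib

open Finset AddSubgroup

/-- radical -/
private def rad' (d : ℕ) : ℕ := ∏ p ∈ d.primeFactors, p

/-- Dedekind psi -/
private def psi' (d : ℕ) : ℕ := (d / rad' d) * ∏ p ∈ d.primeFactors, (p + 1)

private lemma psi'_zero : psi' 0 = 0 := by simp [psi', rad']

private lemma psi'_one : psi' 1 = 1 := by simp [psi', rad']

private lemma psi'_mul {m k : ℕ} (h : m.Coprime k) (hm : m ≠ 0) (hk : k ≠ 0) :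
    psi' (m * k) = psi' m * psi' k := by
  unfold psi' rad'
  rw [Nat.primeFactors_mul hm hk, Finset.prod_union h.disjoint_primeFactors,
    Finset.prod_union h.disjoint_primeFactors,
    ← Nat.div_mul_div_comm (Nat.prod_primeFactors_dvd m) (Nat.prod_primeFactors_dvd k)]
  ring

private lemma psi'_prime_pow {p : ℕ} (hp : p.Prime) (k : ℕ) :
    psi' (p ^ (k + 1)) = p ^ k * (p + 1) := by
  unfold psi' rad'
  rw [Nat.primeFactors_prime_pow (Nat.succ_ne_zero k) hp]
  simp [pow_succ, Nat.mul_div_cancel _ hp.pos]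

private lemma psi'_cast (d : ℕ) (hd : d ≠ 0) :
    (psi' d : ℚ) = (d : ℚ) * ∏ p ∈ d.primeFactors, (1 + 1 / (p : ℚ)) := by
  have hne : ∀ p ∈ d.primeFactors, (p : ℚ) ≠ 0 := fun p hp => by
    exact_mod_cast (Nat.prime_of_mem_primeFactors hp).ne_zero
  have hprod : (∏ p ∈ d.primeFactors, (p : ℚ)) ≠ 0 := Finset.prod_ne_zero_iff.2 hne
  have hradcast : ((rad' d : ℕ) : ℚ) = ∏ p ∈ d.primeFactors, (p : ℚ) := by
    simp [rad']
  have h1 : ∏ p ∈ d.primeFactors, (1 + 1 / (p : ℚ)) =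
      (∏ p ∈ d.primeFactors, ((p : ℚ) + 1)) / ∏ p ∈ d.primeFactors, (p : ℚ) := by
    rw [← Finset.prod_div_distrib]
    refine Finset.prod_congr rfl fun p hp => ?_
    rw [add_div, div_self (hne p hp)]
  have hrad : rad' d ∣ d := Nat.prod_primeFactors_dvd d
  rw [psi', Nat.cast_mul,
    Nat.cast_div hrad (by rw [hradcast]; exact hprod), h1, hradcast]
  push_cast
  field_simp

private lemma sum_totient_psi (d : ℕ) (hd : d ≠ 0) :
    ∑ e ∈ d.divisors, e.totient * psi' e = d ^ 2 := by
  classical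
  let f : ArithmeticFunction ℕ := ⟨fun e => e.totient * psi' e, by simp [psi'_zero]⟩
  have hfe : ∀ e, f e = e.totient * psi' e := fun e => rfl
  have hf : f.IsMultiplicative := by
    refine ⟨by simp [hfe, psi'_one], ?_⟩
    intro m k h
    rcases eq_or_ne m 0 with rfl | hm
    · have : k = 1 := by simpa using h
      subst this; simp [hfe, psi'_zero, psi'_one]
    rcases eq_or_ne k 0 with rfl | hk
    · have : m = 1 := by simpa [Nat.coprime_zero_right] using h
      subst this; simp [hfe, psi'_zero, psi'_one]
    · rw [hfe, hfe, hfe, Nat.totient_mul h, psi'_mul h hm hk]; ring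
  have key : ArithmeticFunction.zeta * f = ArithmeticFunction.pow 2 := by
    rw [ArithmeticFunction.IsMultiplicative.eq_iff_eq_on_prime_powers _
      (ArithmeticFunction.isMultiplicative_zeta.mul hf) _
      ArithmeticFunction.isMultiplicative_pow]
    intro p i hp
    rw [ArithmeticFunction.zeta_mul_apply, Nat.sum_divisors_prime_pow hp,
      ArithmeticFunction.pow_apply, if_neg (by simp)]
    obtain ⟨q, rfl⟩ : ∃ q, p = q + 1 := ⟨p - 1, by have := hp.two_le; omega⟩
    induction i with
    | zero => simp [hfe, psi'_one]
    | succ i ih =>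
      rw [Finset.sum_range_succ, ih, hfe, psi'_prime_pow hp i,
        Nat.totient_prime_pow hp (Nat.succ_pos i)]
      simp only [Nat.add_sub_cancel, Nat.succ_sub_one]
      ring
  have h2 : (ArithmeticFunction.zeta * f) d = ArithmeticFunction.pow 2 d := by rw [key]
  rw [ArithmeticFunction.zeta_mul_apply, ArithmeticFunction.pow_apply,
    if_neg (by simp [hd])] at h2
  exact h2

section GroupCounting

variable {n : ℕ} [NeZero n]

private lemma card_orderOf_dvd_zmod {d : ℕ} (hd : d ∣ n) :
    (Finset.univ.filter fun a : ZMod n => addOrderOf a ∣ d).card = d := by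
  classical
  have hd0 : d ≠ 0 := fun h => NeZero.ne n (Nat.eq_zero_of_zero_dvd (h ▸ hd))
  have hsplit : (Finset.univ.filter fun a : ZMod n => addOrderOf a ∣ d) =
      d.divisors.biUnion fun e => Finset.univ.filter fun a : ZMod n => addOrderOf a = e := by
    ext a
    simp only [Finset.mem_filter, Finset.mem_biUnion, Nat.mem_divisors, Finset.mem_univ, true_and]
    constructor
    · intro h; exact ⟨addOrderOf a, ⟨h, hd0⟩, rfl⟩
    · rintro ⟨e, ⟨he, -⟩, rfl⟩; exact he
  rw [hsplit, Finset.card_biUnion (by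
    intro x hx y hy hxy
    simp only [Finset.disjoint_left, Finset.mem_filter]
    rintro a ⟨-, rfl⟩ ⟨-, h⟩
    exact hxy h)]
  have : ∀ e ∈ d.divisors,
      (Finset.univ.filter fun a : ZMod n => addOrderOf a = e).card = e.totient := by
    intro e he
    have : e ∣ Fintype.card (ZMod n) := by
      rw [ZMod.card]; exact (Nat.mem_divisors.1 he).1.trans hd
    exact IsAddCyclic.card_addOrderOf_eq_totient this
  rw [Finset.sum_congr rfl this, Nat.sum_totient]

private lemma card_orderOf_dvd_prod {d : ℕ} (hd : d ∣ n) :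
    (Finset.univ.filter fun x : ZMod n × ZMod n => addOrderOf x ∣ d).card = d * d := by
  classical
  have hsplit : (Finset.univ.filter fun x : ZMod n × ZMod n => addOrderOf x ∣ d) =
      (Finset.univ.filter fun a : ZMod n => addOrderOf a ∣ d) ×ˢ
        (Finset.univ.filter fun a : ZMod n => addOrderOf a ∣ d) := by
    ext x
    simp only [Finset.mem_filter, Finset.mem_product, Finset.mem_univ, true_and]
    rw [addOrderOf_dvd_iff_nsmul_eq_zero, addOrderOf_dvd_iff_nsmul_eq_zero,
      addOrderOf_dvd_iff_nsmul_eq_zero, Prod.ext_iff]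
    simp
  rw [hsplit, Finset.card_product, card_orderOf_dvd_zmod hd]

private lemma sum_card_orderOf_eq {d : ℕ} (hd : d ∣ n) :
    ∑ e ∈ d.divisors,
      (Finset.univ.filter fun x : ZMod n × ZMod n => addOrderOf x = e).card = d * d := by
  classical
  have hd0 : d ≠ 0 := fun h => NeZero.ne n (Nat.eq_zero_of_zero_dvd (h ▸ hd))
  rw [← card_orderOf_dvd_prod hd]
  rw [Finset.card_biUnion (by
    intro x hx y hy hxy
    simp only [Finset.disjoint_left, Finset.mem_filter]
    rintro a ⟨-, rfl⟩ ⟨-, h⟩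
    exact hxy h) |>.symm]
  congr 1
  ext a
  simp only [Finset.mem_filter, Finset.mem_biUnion, Nat.mem_divisors, Finset.mem_univ, true_and]
  constructor
  · rintro ⟨e, ⟨he, -⟩, rfl⟩; exact he
  · intro h; exact ⟨addOrderOf a, ⟨h, hd0⟩, rfl⟩

end GroupCounting

theorem cyclic_subgroup_count_square (n : ℕ) (hn : 0 < n) :
    (Nat.card {H : AddSubgroup (ZMod n × ZMod n) // ∃ g, H = AddSubgroup.closure {g}} : ℚ) =
      ∑ d ∈ n.divisors, (d : ℚ) * ∏ p ∈ d.primeFactors, (1 + 1 / (p : ℚ)) := by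
  haveI : NeZero n := ⟨hn.ne'⟩
  classical
  set G := ZMod n × ZMod n with hG
  haveI : Fintype (AddSubgroup G) := Fintype.ofFinite _
  -- order of every element divides n
  have hord : ∀ x : G, addOrderOf x ∣ n := by
    intro x
    rw [addOrderOf_dvd_iff_nsmul_eq_zero]
    have h1 : ∀ a : ZMod n, n • a = 0 := by
      intro a
      rw [nsmul_eq_mul, ZMod.natCast_self, zero_mul]
    exact Prod.ext (h1 x.1) (h1 x.2)
  -- counts
  set c : ℕ → ℕ := fun d => (Finset.univ.filter fun H : AddSubgroup G =>
    (∃ g, H = AddSubgroup.closure {g}) ∧ Nat.card H = d).card with hc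
  -- number of cyclic subgroups of card d, times totient d, is number of elts of order d
  have key : ∀ d, d ∣ n → Nat.totient d * c d =
      (Finset.univ.filter fun x : G => addOrderOf x = d).card := by
    intro d hd
    have hd0 : 0 < d := Nat.pos_of_dvd_of_pos hd hn
    have hmaps : ∀ x ∈ (Finset.univ.filter fun x : G => addOrderOf x = d),
        AddSubgroup.zmultiples x ∈ (Finset.univ.filter fun H : AddSubgroup G =>
          (∃ g, H = AddSubgroup.closure {g}) ∧ Nat.card H = d) := by
      intro x hx
      rw [Finset.mem_filter] at hx ⊢
      refine ⟨Finset.mem_univ _, ⟨x, AddSubgroup.zmultiples_eq_closure x⟩, ?_⟩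
      rw [Nat.card_zmultiples]; exact hx.2
    rw [Finset.card_eq_sum_card_fiberwise hmaps]
    have hfiber : ∀ H ∈ (Finset.univ.filter fun H : AddSubgroup G =>
        (∃ g, H = AddSubgroup.closure {g}) ∧ Nat.card H = d),
        ((Finset.univ.filter fun x : G => addOrderOf x = d).filter
          fun x => AddSubgroup.zmultiples x = H).card = Nat.totient d := by
      intro H hH
      rw [Finset.mem_filter] at hH
      obtain ⟨-, ⟨g, rfl⟩, hcard⟩ := hH
      haveI : IsAddCyclic (AddSubgroup.closure ({g} : Set G)) := by
        refine ⟨⟨g, AddSubgroup.mem_closure_singleton.2 ⟨1, one_smul _ _⟩⟩, ?_⟩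
        rintro ⟨x, hx⟩
        obtain ⟨k, hk⟩ := AddSubgroup.mem_closure_singleton.1 hx
        exact ⟨k, Subtype.ext (by simpa using hk)⟩
      haveI : Fintype (AddSubgroup.closure ({g} : Set G)) := Fintype.ofFinite _
      have hcard' : Fintype.card (AddSubgroup.closure ({g} : Set G)) = d := by
        rw [← Nat.card_eq_fintype_card]; exact hcard
      have htot : (Finset.univ.filter
          fun y : AddSubgroup.closure ({g} : Set G) => addOrderOf y = d).card
          = Nat.totient d := by
        have := IsAddCyclic.card_addOrderOf_eq_totient
          (α := AddSubgroup.closure ({g} : Set G)) (d := d) (hcard' ▸ dvd_rfl)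
        simpa using this
      rw [← htot]
      refine (Finset.card_nbij
        (s := Finset.univ.filter
          fun y : AddSubgroup.closure ({g} : Set G) => addOrderOf y = d)
        (t := (Finset.univ.filter fun x : G => addOrderOf x = d).filter
          fun x => AddSubgroup.zmultiples x = AddSubgroup.closure ({g} : Set G))
        (fun y => (y : G)) ?_ ?_ ?_).symm
      · intro y hy
        simp only [Finset.mem_coe, Finset.mem_filter, Finset.mem_univ, true_and] at hy ⊢
        have hyo : addOrderOf (y : G) = d := by
          rw [AddSubgroup.addOrderOf_coe]; exact hy
        refine ⟨hyo, ?_⟩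
        apply AddSubgroup.eq_of_le_of_card_ge
        · rw [AddSubgroup.zmultiples_eq_closure]
          exact (AddSubgroup.closure_le _).2 (Set.singleton_subset_iff.2 y.2)
        · rw [Nat.card_zmultiples, hyo, hcard]
      · intro a _ b _ hab
        exact Subtype.ext hab
      · intro x hx
        simp only [Finset.coe_filter, Finset.mem_filter, Finset.mem_univ, true_and,
          Set.mem_setOf_eq] at hx
        obtain ⟨hxo, hxz⟩ := hx
        have hxmem : x ∈ AddSubgroup.closure ({g} : Set G) := by
          rw [← hxz]; exact AddSubgroup.mem_zmultiples x
        refine ⟨⟨x, hxmem⟩, ?_, rfl⟩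
        simp only [Finset.coe_filter, Finset.mem_filter, Finset.mem_univ, true_and,
          Set.mem_setOf_eq]
        rw [AddSubgroup.addOrderOf_mk]
        exact hxo
    rw [Finset.sum_congr rfl hfiber, Finset.sum_const, smul_eq_mul, mul_comm, hc]
  -- divisor sums
  have hsum : ∀ d, d ∣ n → ∑ e ∈ d.divisors, Nat.totient e * c e = d ^ 2 := by
    intro d hd
    have : ∀ e ∈ d.divisors, Nat.totient e * c e =
        (Finset.univ.filter fun x : G => addOrderOf x = e).card := by
      intro e he
      exact key e ((Nat.mem_divisors.1 he).1.trans hd)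
    rw [Finset.sum_congr rfl this, sum_card_orderOf_eq hd, sq]
  -- strong induction: c d = psi' d for all d ∣ n
  have hcpsi : ∀ d, d ∣ n → c d = psi' d := by
    intro d
    induction d using Nat.strong_induction_on with
    | _ d ih =>
      intro hd
      have hd0 : 0 < d := Nat.pos_of_dvd_of_pos hd hn
      have h1 := hsum d hd
      have h2 := sum_totient_psi d hd0.ne'
      rw [← Nat.insert_self_properDivisors hd0.ne',
        Finset.sum_insert Nat.self_notMem_properDivisors] at h1 h2
      have hprop : ∑ e ∈ d.properDivisors, Nat.totient e * c e =
          ∑ e ∈ d.properDivisors, Nat.totient e * psi' e := by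
        apply Finset.sum_congr rfl
        intro e he
        rw [ih e (Nat.mem_properDivisors.1 he).2 ((Nat.mem_properDivisors.1 he).1.trans hd)]
      rw [hprop] at h1
      have h3 : Nat.totient d * c d = Nat.totient d * psi' d :=
        Nat.add_right_cancel (h1.trans h2.symm)
      exact Nat.eq_of_mul_eq_mul_left (Nat.totient_pos.2 hd0) h3
  -- assemble
  have hcard : Nat.card {H : AddSubgroup G // ∃ g, H = AddSubgroup.closure {g}} =
      ∑ d ∈ n.divisors, c d := by
    rw [Nat.card_eq_fintype_card, Fintype.card_subtype]
    rw [← Finset.card_biUnion (by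
      intro x hx y hy hxy
      simp only [Finset.disjoint_left, Finset.mem_filter]
      rintro H ⟨-, -, rfl⟩ ⟨-, -, h⟩
      exact hxy h)]
    congr 1
    ext H
    simp only [Finset.mem_filter, Finset.mem_biUnion, Nat.mem_divisors, Finset.mem_univ, true_and]
    constructor
    · intro h
      obtain ⟨g, hg⟩ := id h
      refine ⟨Nat.card H, ⟨?_, hn.ne'⟩, h, rfl⟩
      rw [hg, ← AddSubgroup.zmultiples_eq_closure, Nat.card_zmultiples]
      exact hord g
    · rintro ⟨e, -, h, -⟩; exact h
  rw [hcard]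
  push_cast
  rw [Finset.sum_congr rfl (fun d hd => by
    rw [hcpsi d (Nat.mem_divisors.1 hd).1])]
  push_cast
  apply Finset.sum_congr rfl
  intro d hd
  exact psi'_cast d (Nat.pos_of_mem_divisors hd).ne'
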